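/- Let Σ₁ := {a, b, c, f}, Σ₂ := {b, c, e}, L₁ := { cⁿ } ∪ { cⁿ·a·cᵐ } ∪ { cⁿ·f } ∪ { cⁿ·f·b·cᵐ } (n, m ≥ 0) over Σ₁, L₂ := { cⁿ } ∪ { cⁿ·b } ∪ { cⁿ·b·e·cᵐ } (n, m ≥ 0) over Σ₂, and L := L₁ ∥ L₂ over Σ := {a, b, c, e, f} with observable events Σₒ := {c, e} and projection M onto Σₒ. Then: (i) every string w ∈ L in which f does not occur has an observation consisting only of c's, i.e., M(w) ∈ {c}*; and (ii) every string w ∈ L in which at least two events occur after the occurrence of f contains the event e, so M(w) contains an occurrence of e. Consequently, the observations of sufficiently extended faulty strings of L are disjoint from the observations of non-faulty strings of L. -/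

import Mathlib

/-- The events of the paper's example. -/
inductive Ev : Type
  | a | b | c | e | f
deriving DecidableEq

/-- Natural projection: erase all events not in `S`. -/
def proj (S : Finset Ev) (s : List Ev) : List Ev :=
  s.filter (· ∈ S)

/-- Parallel composition of two languages over alphabets `S1` and `S2`. -/
def par (S1 S2 : Finset Ev) (L1 L2 : Set (List Ev)) : Set (List Ev) :=
  {s | (∀ x ∈ s, x ∈ S1 ∪ S2) ∧ proj S1 s ∈ L1 ∧ proj S2 s ∈ L2}

/-- The language of automaton `G₁` over `Σ₁ = {a,b,c,f}`:
`c* ∪ c*·a·c* ∪ c*·f ∪ c*·f·b·c*`. -/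
def L1 : Set (List Ev) :=
  {w | ∃ n, w = List.replicate n Ev.c} ∪
  {w | ∃ n m, w = List.replicate n Ev.c ++ Ev.a :: List.replicate m Ev.c} ∪
  {w | ∃ n, w = List.replicate n Ev.c ++ [Ev.f]} ∪
  {w | ∃ n m, w = List.replicate n Ev.c ++ Ev.f :: Ev.b :: List.replicate m Ev.c}

/-- The language of automaton `G₂` over `Σ₂ = {b,c,e}`:
`c* ∪ c*·b ∪ c*·b·e·c*`. -/
def L2 : Set (List Ev) :=
  {w | ∃ n, w = List.replicate n Ev.c} ∪
  {w | ∃ n, w = List.replicate n Ev.c ++ [Ev.b]} ∪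
  {w | ∃ n m, w = List.replicate n Ev.c ++ Ev.b :: Ev.e :: List.replicate m Ev.c}

/-- The global language `L := L₁ ∥ L₂`. -/
def L : Set (List Ev) :=
  par {Ev.a, Ev.b, Ev.c, Ev.f} {Ev.b, Ev.c, Ev.e} L1 L2

open List

lemma memS1_of_ne_e : ∀ x : Ev, x ≠ Ev.e → x ∈ ({Ev.a, Ev.b, Ev.c, Ev.f} : Finset Ev) := by
  intro x; cases x <;> decide

lemma memSo_cases : ∀ x : Ev, x ∈ ({Ev.c, Ev.e} : Finset Ev) → x = Ev.c ∨ x = Ev.e := by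
  intro x; cases x <;> decide

lemma split_unique {x : Ev} {l1 : List Ev} : ∀ {l2 r1 r2 : List Ev},
    l1 ++ x :: r1 = l2 ++ x :: r2 → x ∉ l1 → x ∉ l2 → l1 = l2 ∧ r1 = r2 := by
  induction l1 with
  | nil =>
    intro l2 r1 r2 h h1 h2
    cases l2 with
    | nil => simpa using h
    | cons z s =>
      simp only [nil_append, cons_append, List.cons.injEq] at h
      rcases h with ⟨rfl, -⟩
      exact absurd mem_cons_self h2
  | cons y t ih =>
    intro l2 r1 r2 h h1 h2
    cases l2 with
    | nil =>
      simp only [cons_append, nil_append, List.cons.injEq] at h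
      rcases h with ⟨rfl, -⟩
      exact absurd mem_cons_self h1
    | cons z s =>
      simp only [cons_append, List.cons.injEq] at h
      obtain ⟨rfl, h'⟩ := h
      have := ih h' (fun hx => h1 (mem_cons_of_mem _ hx))
        (fun hx => h2 (mem_cons_of_mem _ hx))
      exact ⟨by rw [this.1], this.2⟩

lemma no_e_of_no_f (w : List Ev) (hw : w ∈ L) (hf : Ev.f ∉ w) : Ev.e ∉ w := by
  intro he
  obtain ⟨hall, h1, h2⟩ := hw
  have he2 : Ev.e ∈ proj {Ev.b, Ev.c, Ev.e} w :=
    mem_filter.mpr ⟨he, by decide⟩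
  rcases h2 with (⟨n, hn⟩ | ⟨n, hn⟩) | ⟨n, m, hn⟩
  · rw [hn, mem_replicate] at he2; exact absurd he2.2 (by decide)
  · rw [hn] at he2
    simp only [mem_append, mem_replicate, mem_singleton] at he2
    rcases he2 with ⟨-, h⟩ | h <;> exact absurd h (by decide)
  · -- b occurs in w, hence in proj S1 w, forcing f
    have hb : Ev.b ∈ proj {Ev.b, Ev.c, Ev.e} w := by
      rw [hn]; exact mem_append_right _ mem_cons_self
    have hbw : Ev.b ∈ w := (mem_filter.mp hb).1
    have hb1 : Ev.b ∈ proj {Ev.a, Ev.b, Ev.c, Ev.f} w :=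
      mem_filter.mpr ⟨hbw, by decide⟩
    rcases h1 with ((⟨k, hk⟩ | ⟨k, l, hk⟩) | ⟨k, hk⟩) | ⟨k, l, hk⟩
    · rw [hk, mem_replicate] at hb1; exact absurd hb1.2 (by decide)
    · rw [hk] at hb1
      simp only [mem_append, mem_replicate, mem_cons] at hb1
      rcases hb1 with ⟨-, h⟩ | h | ⟨-, h⟩ <;> exact absurd h (by decide)
    · rw [hk] at hb1
      simp only [mem_append, mem_replicate, mem_singleton] at hb1
      rcases hb1 with ⟨-, h⟩ | h <;> exact absurd h (by decide)
    · have hfw : Ev.f ∈ proj {Ev.a, Ev.b, Ev.c, Ev.f} w := by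
        rw [hk]; exact mem_append_right _ mem_cons_self
      exact hf (mem_filter.mp hfw).1

lemma e_of_faulty (w : List Ev) (hw : w ∈ L) (u v : List Ev)
    (hwv : w = u ++ Ev.f :: v) (hv : 2 ≤ v.length) : Ev.e ∈ w := by
  by_contra he
  obtain ⟨hall, h1, h2⟩ := hw
  subst hwv
  set S1 : Finset Ev := {Ev.a, Ev.b, Ev.c, Ev.f} with hS1
  set S2 : Finset Ev := {Ev.b, Ev.c, Ev.e} with hS2
  have hsplit1 : proj S1 (u ++ Ev.f :: v) = proj S1 u ++ Ev.f :: proj S1 v := by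
    simp [proj, List.filter_append, List.filter_cons, hS1]
  -- every element of v lies in S1 (it is not e), so proj S1 v = v
  have hvS1 : proj S1 v = v := by
    apply List.filter_eq_self.mpr
    intro x hx
    have hxw : x ∈ u ++ Ev.f :: v := mem_append_right _ (mem_cons_of_mem _ hx)
    have hx12 := hall x hxw
    have hxe : x ≠ Ev.e := fun h => he (h ▸ hxw)
    simp only [decide_eq_true_eq]
    exact memS1_of_ne_e x hxe
  rcases h1 with ((⟨n, hn⟩ | ⟨n, l, hn⟩) | ⟨n, hn⟩) | ⟨n, m, hn⟩
  · have : Ev.f ∈ proj S1 (u ++ Ev.f :: v) := by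
      rw [hsplit1]; exact mem_append_right _ mem_cons_self
    rw [hn, mem_replicate] at this; exact absurd this.2 (by decide)
  · have : Ev.f ∈ proj S1 (u ++ Ev.f :: v) := by
      rw [hsplit1]; exact mem_append_right _ mem_cons_self
    rw [hn] at this
    simp only [mem_append, mem_replicate, mem_cons] at this
    rcases this with ⟨-, h⟩ | h | ⟨-, h⟩ <;> exact absurd h (by decide)
  · -- proj S1 w = c^n ++ [f] : then v = [], contradiction
    have hfu : Ev.f ∉ proj S1 u := by
      intro hfu
      have hcount : (proj S1 (u ++ Ev.f :: v)).count Ev.f =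
          (List.replicate n Ev.c ++ [Ev.f]).count Ev.f := by rw [hn]
      rw [hsplit1] at hcount
      simp only [List.count_append, List.count_cons, List.count_replicate,
        List.count_singleton, List.count_nil] at hcount
      have := List.count_pos_iff.mpr hfu
      simp at hcount
      omega
    have hkey := split_unique (hsplit1.symm.trans hn) hfu
      (by simp [mem_replicate])
    have hv0 : proj S1 v = [] := hkey.2
    rw [hvS1] at hv0
    rw [hv0] at hv; simp at hv
  · -- proj S1 w = c^n ++ f :: b :: c^m
    have hcount : (proj S1 (u ++ Ev.f :: v)).count Ev.f =
        (List.replicate n Ev.c ++ Ev.f :: Ev.b :: List.replicate m Ev.c).count Ev.f := by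
      rw [hn]
    rw [hsplit1] at hcount
    simp only [List.count_append, List.count_cons, List.count_replicate] at hcount
    have hfu : Ev.f ∉ proj S1 u := by
      intro hfu
      have := List.count_pos_iff.mpr hfu
      simp at hcount
      omega
    have hkey := split_unique (hsplit1.symm.trans hn) hfu (by simp [mem_replicate])
    have hu1 : proj S1 u = List.replicate n Ev.c := hkey.1
    have hv1 : v = Ev.b :: Ev.c :: List.replicate (m - 1) Ev.c := by
      have := hkey.2
      rw [hvS1] at this
      cases m with
      | zero => rw [this] at hv; simp at hv
      | succ m' => rw [this]; simp [List.replicate_succ]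
    -- no b in u
    have hbu : Ev.b ∉ u := by
      intro hbu
      have : Ev.b ∈ proj S1 u := mem_filter.mpr ⟨hbu, by decide⟩
      rw [hu1, mem_replicate] at this
      exact absurd this.2 (by decide)
    have hbu2 : Ev.b ∉ proj S2 u := fun h => hbu (mem_filter.mp h).1
    have hsplit2 : proj S2 (u ++ Ev.f :: v) =
        proj S2 u ++ Ev.b :: Ev.c :: List.replicate (m - 1) Ev.c := by
      rw [hv1]
      simp [proj, List.filter_append, List.filter_cons, hS2,
        List.filter_replicate]
    rcases h2 with (⟨k, hk⟩ | ⟨k, hk⟩) | ⟨k, l, hk⟩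
    · have : Ev.b ∈ proj S2 (u ++ Ev.f :: v) := by
        rw [hsplit2]; exact mem_append_right _ mem_cons_self
      rw [hk, mem_replicate] at this; exact absurd this.2 (by decide)
    · have heq : proj S2 u ++ Ev.b :: Ev.c :: List.replicate (m-1) Ev.c =
          List.replicate k Ev.c ++ Ev.b :: [] := by
        rw [← hsplit2, hk]
      have := (split_unique heq hbu2 (by simp [mem_replicate])).2
      simp at this
    · have : Ev.e ∈ proj S2 (u ++ Ev.f :: v) := by
        rw [hk]
        exact mem_append_right _ (mem_cons_of_mem _ mem_cons_self)
      exact he (mem_filter.mp this).1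

/-- Structural facts about `L := L₁ ∥ L₂` with observable events `{c, e}`:
(i) every string of `L` without `f` has observation in `c*`; (ii) every
string of `L` with at least two events after the occurrence of `f` contains
`e`, hence its observation contains `e`; consequently the observations of
such extended faulty strings are disjoint from those of non-faulty strings. -/
theorem stmt9 :
    (∀ w ∈ L, Ev.f ∉ w →
      ∃ k, proj {Ev.c, Ev.e} w = List.replicate k Ev.c) ∧
    (∀ w ∈ L, ∀ u v : List Ev, w = u ++ Ev.f :: v → 2 ≤ v.length →
      Ev.e ∈ w ∧ Ev.e ∈ proj {Ev.c, Ev.e} w) ∧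
    (∀ w ∈ L, ∀ w' ∈ L,
      (∃ u v : List Ev, w = u ++ Ev.f :: v ∧ 2 ≤ v.length) → Ev.f ∉ w' →
        proj {Ev.c, Ev.e} w ≠ proj {Ev.c, Ev.e} w') := by
  have part1 : ∀ w ∈ L, Ev.f ∉ w →
      ∃ k, proj {Ev.c, Ev.e} w = List.replicate k Ev.c := by
    intro w hw hf
    have he := no_e_of_no_f w hw hf
    refine ⟨(proj {Ev.c, Ev.e} w).length, List.eq_replicate_iff.mpr ⟨rfl, ?_⟩⟩
    intro x hx
    obtain ⟨hxw, hxS⟩ := List.mem_filter.mp hx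
    have : x = Ev.c ∨ x = Ev.e := memSo_cases x (by simpa using hxS)
    rcases this with rfl | rfl
    · rfl
    · exact absurd hxw he
  have part2 : ∀ w ∈ L, ∀ u v : List Ev, w = u ++ Ev.f :: v → 2 ≤ v.length →
      Ev.e ∈ w ∧ Ev.e ∈ proj {Ev.c, Ev.e} w := by
    intro w hw u v hwv hv
    have he := e_of_faulty w hw u v hwv hv
    exact ⟨he, List.mem_filter.mpr ⟨he, by decide⟩⟩
  refine ⟨part1, part2, ?_⟩
  intro w hw w' hw' ⟨u, v, hwv, hv⟩ hf' heq
  obtain ⟨-, he⟩ := part2 w hw u v hwv hv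
  obtain ⟨k, hk⟩ := part1 w' hw' hf'
  rw [heq, hk, List.mem_replicate] at he
  exact absurd he.2 (by decide)
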